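/- Let b be a torsion form on a finite abelian group T and q a homogeneous quadratic refinement of b (i.e. q(x) = q(-x) for all x). Then 8·A(q) ∈ ℤ, i.e. the Arf invariant of q is an eighth of an integer. -/

import Mathlib

/-- The exponential character `r ↦ e^{2πir}` on `ℚ`. -/
noncomputable def eQ : ℚ → ℂ := fun r => Complex.exp (2 * Real.pi * Complex.I * (r : ℂ))

theorem eQ_periodic : Function.Periodic eQ 1 := by
  intro r
  simp only [eQ]
  push_cast
  rw [mul_add, mul_one, Complex.exp_add, Complex.exp_two_pi_mul_I, mul_one]

/-- The induced character `e^{2πi ·} : ℚ/ℤ → ℂ`. -/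
noncomputable def eQZ : AddCircle (1 : ℚ) → ℂ := eQ_periodic.lift

lemma eQ_add (r s : ℚ) : eQ (r + s) = eQ r * eQ s := by
  simp only [eQ]
  push_cast
  rw [mul_add, Complex.exp_add]

lemma eQZ_coe (r : ℚ) : eQZ (r : AddCircle (1 : ℚ)) = eQ r :=
  Function.Periodic.lift_coe _ _

lemma eQZ_add (x y : AddCircle (1 : ℚ)) : eQZ (x + y) = eQZ x * eQZ y := by
  induction x using QuotientAddGroup.induction_on with
  | H r =>
    induction y using QuotientAddGroup.induction_on with
    | H s =>
      rw [← QuotientAddGroup.mk_add, eQZ_coe, eQZ_coe, eQZ_coe, eQ_add]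

lemma eQ_neg (r : ℚ) : eQ (-r) = (starRingEnd ℂ) (eQ r) := by
  simp only [eQ, ← Complex.exp_conj]
  congr 1
  simp only [map_mul, Complex.conj_I, Complex.conj_ofReal, map_ofNat, map_ratCast]
  push_cast
  ring

lemma eQZ_neg (x : AddCircle (1 : ℚ)) : eQZ (-x) = (starRingEnd ℂ) (eQZ x) := by
  induction x using QuotientAddGroup.induction_on with
  | H r => rw [← QuotientAddGroup.mk_neg, eQZ_coe, eQZ_coe, eQ_neg]

lemma eQZ_zero : eQZ (0 : AddCircle (1 : ℚ)) = 1 := by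
  rw [show (0 : AddCircle (1 : ℚ)) = ((0 : ℚ) : AddCircle (1 : ℚ)) from rfl, eQZ_coe]
  simp [eQ]

lemma eQZ_nsmul (n : ℕ) (x : AddCircle (1 : ℚ)) : eQZ (n • x) = eQZ x ^ n := by
  induction n with
  | zero => simp [eQZ_zero]
  | succ k ih => rw [succ_nsmul, eQZ_add, ih, pow_succ]

lemma eQZ_eq_one {x : AddCircle (1 : ℚ)} (h : eQZ x = 1) : x = 0 := by
  induction x using QuotientAddGroup.induction_on with
  | H r =>
    rw [eQZ_coe] at h
    simp only [eQ] at h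
    rw [Complex.exp_eq_one_iff] at h
    obtain ⟨n, hn⟩ := h
    have h2 : (2 * (Real.pi : ℂ) * Complex.I) ≠ 0 := Complex.two_pi_I_ne_zero
    have hr : (r : ℂ) = (n : ℂ) := by
      have hmul : (2 * (Real.pi : ℂ) * Complex.I) * (r : ℂ)
          = (2 * (Real.pi : ℂ) * Complex.I) * (n : ℂ) := by
        linear_combination hn
      exact mul_left_cancel₀ h2 hmul
    have hrq : r = (n : ℚ) := by exact_mod_cast hr
    rw [hrq]
    exact (AddCircle.coe_eq_zero_iff _).mpr ⟨n, by simp⟩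

/-- The "quaternion" map on `T⁴` associated to integers `a1 a2 a3 a4`. -/
def quatMap {T : Type*} [AddCommGroup T] (a1 a2 a3 a4 : ℤ) (v : T × T × T × T) :
    T × T × T × T :=
  (a1 • v.1 + (-a2) • v.2.1 + (-a3) • v.2.2.1 + (-a4) • v.2.2.2,
   a2 • v.1 + a1 • v.2.1 + (-a4) • v.2.2.1 + a3 • v.2.2.2,
   a3 • v.1 + a4 • v.2.1 + a1 • v.2.2.1 + (-a2) • v.2.2.2,
   a4 • v.1 + (-a3) • v.2.1 + a2 • v.2.2.1 + a1 • v.2.2.2)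

/-- The inverse quaternion map (negated transpose). -/
def quatInv {T : Type*} [AddCommGroup T] (a1 a2 a3 a4 : ℤ) (u : T × T × T × T) :
    T × T × T × T :=
  ((-a1) • u.1 + (-a2) • u.2.1 + (-a3) • u.2.2.1 + (-a4) • u.2.2.2,
   a2 • u.1 + (-a1) • u.2.1 + (-a4) • u.2.2.1 + a3 • u.2.2.2,
   a3 • u.1 + a4 • u.2.1 + (-a1) • u.2.2.1 + (-a2) • u.2.2.2,
   a4 • u.1 + (-a3) • u.2.1 + a2 • u.2.2.1 + (-a1) • u.2.2.2)

lemma quat_left_inv {T : Type*} [AddCommGroup T] (a1 a2 a3 a4 : ℤ)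
    (hc : ∀ t : T, (-(a1 ^ 2 + a2 ^ 2 + a3 ^ 2 + a4 ^ 2)) • t = t) :
    ∀ v : T × T × T × T, quatInv a1 a2 a3 a4 (quatMap a1 a2 a3 a4 v) = v := by
  rintro ⟨x, y, z, w⟩
  simp only [quatMap, quatInv, Prod.mk.injEq]
  refine ⟨?_, ?_, ?_, ?_⟩
  · refine Eq.trans ?_ (hc x); module
  · refine Eq.trans ?_ (hc y); module
  · refine Eq.trans ?_ (hc z); module
  · refine Eq.trans ?_ (hc w); module

lemma quat_right_inv {T : Type*} [AddCommGroup T] (a1 a2 a3 a4 : ℤ)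
    (hc : ∀ t : T, (-(a1 ^ 2 + a2 ^ 2 + a3 ^ 2 + a4 ^ 2)) • t = t) :
    ∀ v : T × T × T × T, quatMap a1 a2 a3 a4 (quatInv a1 a2 a3 a4 v) = v := by
  rintro ⟨x, y, z, w⟩
  simp only [quatMap, quatInv, Prod.mk.injEq]
  refine ⟨?_, ?_, ?_, ?_⟩
  · refine Eq.trans ?_ (hc x); module
  · refine Eq.trans ?_ (hc y); module
  · refine Eq.trans ?_ (hc z); module
  · refine Eq.trans ?_ (hc w); module

/-- the Arf invariant of a homogeneous quadratic refinement `q` of a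
torsion form `b` on a finite abelian group satisfies `8·A(q) ∈ ℤ`, i.e. `8 A(q) = 0`
in `ℚ/ℤ`, where `A(q)` is defined by `Σ_{x∈T} e^{2πi q(x)} = √|T| e^{2πi A(q)}`. -/
theorem stmt8 {T : Type*} [AddCommGroup T] [Fintype T]
    (b : T → T → AddCircle (1 : ℚ))
    (hsymm : ∀ x y, b x y = b y x)
    (hadd : ∀ x y z, b (x + y) z = b x z + b y z)
    (hinj : ∀ x y : T, (∀ z, b z x = b z y) → x = y)
    (hsurj : ∀ φ : T →+ AddCircle (1 : ℚ), ∃ x : T, ∀ z, φ z = b z x)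
    (q : T → AddCircle (1 : ℚ))
    (hq : ∀ x y, q (x + y) = q x + q y + b x y)
    (hhom : ∀ x, q x = q (-x))
    (Arf : AddCircle (1 : ℚ))
    (hArf : ∑ x : T, eQZ (q x) = Real.sqrt (Fintype.card T) * eQZ Arf) :
    (8 : ℤ) • Arf = 0 := by
  classical
  have hN1 : 1 ≤ Fintype.card T := Fintype.card_pos
  set N : ℕ := Fintype.card T with hNdef
  -- torsion: N kills T
  have hNt : ∀ t : T, (N : ℤ) • t = 0 := by
    intro t
    rw [natCast_zsmul]
    exact card_nsmul_eq_zero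
  have hNZ : ∀ t : T, ((N : ℤ) ^ 2) • t = 0 := by
    intro t
    rw [pow_two, mul_smul, hNt]
  -- bilinearity of b
  let Bhom : T → (T →+ AddCircle (1 : ℚ)) := fun y =>
    AddMonoidHom.mk' (fun x => b x y) (fun p r => hadd p r y)
  have bsl : ∀ (n : ℤ) (x y : T), b (n • x) y = n • b x y := fun n x y =>
    map_zsmul (Bhom y) n x
  have bsr : ∀ (n : ℤ) (x y : T), b x (n • y) = n • b x y := by
    intro n x y
    rw [hsymm, bsl, hsymm]
  have b0 : ∀ y, b 0 y = 0 := fun y => map_zero (Bhom y)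
  have bnegr : ∀ x y, b x (-y) = - b x y := by
    intro x y
    rw [show -y = (-1 : ℤ) • y by simp, bsr]
    simp
  have q0 : q 0 = 0 := by
    have h := hq 0 0
    rw [add_zero, b0, add_zero] at h
    exact (right_eq_add.mp h)
  have qneg : ∀ x, q (-x) = q x := fun x => (hhom x).symm
  have bself : ∀ x, b x x = q x + q x := by
    intro x
    have h := hq x (-x)
    rw [add_neg_cancel, q0, qneg, bnegr] at h
    have h2 : q x + q x + -(b x x) = 0 := h.symm
    exact (add_neg_eq_zero.mp h2).symm
  have qnsmul : ∀ (n : ℕ) (x : T), q (n • x) = (n ^ 2) • q x := by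
    intro n x
    induction n with
    | zero => simp [q0]
    | succ k ih =>
      have hb : b (k • x) x = k • b x x := by
        have h := bsl (k : ℤ) x x
        rw [natCast_zsmul, natCast_zsmul] at h
        exact h
      rw [succ_nsmul, hq, ih, hb, bself]
      module
  have qzsmul : ∀ (n : ℤ) (x : T), q (n • x) = (n ^ 2) • q x := by
    intro n x
    obtain ⟨m, rfl | rfl⟩ := n.eq_nat_or_neg
    · rw [natCast_zsmul, qnsmul, show ((m : ℤ) ^ 2) = ((m ^ 2 : ℕ) : ℤ) by push_cast; ring,
        natCast_zsmul]
    · rw [neg_smul, qneg, natCast_zsmul, qnsmul,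
        show ((-(m : ℤ)) ^ 2) = ((m ^ 2 : ℕ) : ℤ) by push_cast; ring, natCast_zsmul]
  have hkill : ∀ x : T, ((N : ℤ) ^ 2) • q x = 0 := by
    intro x
    have h := qzsmul (N : ℤ) x
    rw [hNt x, q0] at h
    exact h.symm
  have qexp4 : ∀ p r s t : T, q (p + r + s + t) =
      q p + q r + q s + q t + b p r + b p s + b p t + b r s + b r t + b s t := by
    intro p r s t
    rw [hq (p + r + s) t, hq (p + r) s, hq p r, hadd (p + r) s t, hadd p r t, hadd p r s]
    abel
  have rowq : ∀ (m1 m2 m3 m4 : ℤ) (x y z w : T),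
      q (m1 • x + m2 • y + m3 • z + m4 • w) =
        (m1 ^ 2) • q x + (m2 ^ 2) • q y + (m3 ^ 2) • q z + (m4 ^ 2) • q w +
        (m1 * m2) • b x y + (m1 * m3) • b x z + (m1 * m4) • b x w +
        (m2 * m3) • b y z + (m2 * m4) • b y w + (m3 * m4) • b z w := by
    intro m1 m2 m3 m4 x y z w
    rw [qexp4]
    simp only [qzsmul, bsl, bsr]
    module
  -- Lagrange four squares: a1² + a2² + a3² + a4² ≡ -1 mod N²
  obtain ⟨A1, A2, A3, A4, hL⟩ := Nat.sum_four_squares (N ^ 2 - 1)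
  have hs : (A1 : ℤ) ^ 2 + (A2 : ℤ) ^ 2 + (A3 : ℤ) ^ 2 + (A4 : ℤ) ^ 2 = (N : ℤ) ^ 2 - 1 := by
    have h1 : 1 ≤ N ^ 2 := by nlinarith
    have hL' : A1 ^ 2 + A2 ^ 2 + A3 ^ 2 + A4 ^ 2 + 1 = N ^ 2 := by omega
    have := congrArg (fun k : ℕ => (k : ℤ)) hL'
    push_cast at this
    linarith
  set a1 : ℤ := (A1 : ℤ) with ha1
  set a2 : ℤ := (A2 : ℤ) with ha2
  set a3 : ℤ := (A3 : ℤ) with ha3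
  set a4 : ℤ := (A4 : ℤ) with ha4
  have cancel : ∀ t : T, (-(a1 ^ 2 + a2 ^ 2 + a3 ^ 2 + a4 ^ 2)) • t = t := by
    intro t
    rw [hs]
    have h1 : (-((N : ℤ) ^ 2 - 1)) • t = t - ((N : ℤ) ^ 2) • t := by module
    rw [h1, hNZ, sub_zero]
  have hbij : Function.Bijective (quatMap a1 a2 a3 a4 : T × T × T × T → T × T × T × T) :=
    Function.bijective_iff_has_inverse.mpr
      ⟨quatInv a1 a2 a3 a4, quat_left_inv a1 a2 a3 a4 cancel, quat_right_inv a1 a2 a3 a4 cancel⟩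
  -- the key pointwise identity: Q ∘ quatMap = -Q
  have hQM : ∀ v : T × T × T × T,
      q (quatMap a1 a2 a3 a4 v).1 + q (quatMap a1 a2 a3 a4 v).2.1 +
        q (quatMap a1 a2 a3 a4 v).2.2.1 + q (quatMap a1 a2 a3 a4 v).2.2.2
      = -(q v.1 + q v.2.1 + q v.2.2.1 + q v.2.2.2) := by
    rintro ⟨x, y, z, w⟩
    simp only [quatMap]
    rw [rowq, rowq, rowq, rowq]
    have hk4 : ((N : ℤ) ^ 2) • (q x + q y + q z + q w) = 0 := by
      simp only [smul_add, hkill, add_zero]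
    rw [show -(q x + q y + q z + q w)
        = ((N : ℤ) ^ 2 - 1) • (q x + q y + q z + q w)
          - ((N : ℤ) ^ 2) • (q x + q y + q z + q w) by module,
      hk4, sub_zero, ← hs]
    module
  -- expand the fourth power of the Gauss sum as a sum over T⁴
  have hA : (∑ x : T, eQZ (q x)) ^ 4
      = ∑ v : T × T × T × T, eQZ (q v.1 + q v.2.1 + q v.2.2.1 + q v.2.2.2) := by
    have hprod : ∀ v : T × T × T × T,
        eQZ (q v.1 + q v.2.1 + q v.2.2.1 + q v.2.2.2)
          = eQZ (q v.1) * eQZ (q v.2.1) * eQZ (q v.2.2.1) * eQZ (q v.2.2.2) := by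
      intro v
      rw [eQZ_add, eQZ_add, eQZ_add]
    simp only [hprod, Fintype.sum_prod_type, ← Finset.sum_mul, ← Finset.mul_sum]
    ring
  -- reindex by the quaternion bijection and conjugate
  have hB : (∑ v : T × T × T × T, eQZ (q v.1 + q v.2.1 + q v.2.2.1 + q v.2.2.2))
      = starRingEnd ℂ (∑ v : T × T × T × T, eQZ (q v.1 + q v.2.1 + q v.2.2.1 + q v.2.2.2)) := by
    conv_lhs => rw [← Function.Bijective.sum_comp hbij
      (fun v : T × T × T × T => eQZ (q v.1 + q v.2.1 + q v.2.2.1 + q v.2.2.2))]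
    rw [map_sum]
    apply Finset.sum_congr rfl
    intro v _
    rw [hQM v]
    exact eQZ_neg _
  have hG4 : (∑ x : T, eQZ (q x)) ^ 4 = starRingEnd ℂ ((∑ x : T, eQZ (q x)) ^ 4) := by
    conv_lhs => rw [hA, hB, ← hA]
  -- now use hArf
  rw [hArf] at hG4
  have hRE : ((Real.sqrt N : ℝ) : ℂ) ^ 4 = (N : ℂ) ^ 2 := by
    have h1 : (Real.sqrt (N : ℝ)) ^ 2 = (N : ℝ) := Real.sq_sqrt (by positivity)
    calc ((Real.sqrt (N : ℝ) : ℝ) : ℂ) ^ 4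
        = ((((Real.sqrt (N : ℝ)) ^ 2 : ℝ)) : ℂ) ^ 2 := by push_cast; ring
      _ = (((N : ℝ)) : ℂ) ^ 2 := by rw [h1]
      _ = (N : ℂ) ^ 2 := by norm_num
  have hEE : (N : ℂ) ^ 2 * eQZ Arf ^ 4 = (N : ℂ) ^ 2 * (starRingEnd ℂ (eQZ Arf)) ^ 4 := by
    have lhs : (((Real.sqrt N : ℝ) : ℂ) * eQZ Arf) ^ 4 = (N : ℂ) ^ 2 * eQZ Arf ^ 4 := by
      rw [mul_pow, hRE]
    have rhs : starRingEnd ℂ ((((Real.sqrt N : ℝ) : ℂ) * eQZ Arf) ^ 4)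
        = (N : ℂ) ^ 2 * (starRingEnd ℂ (eQZ Arf)) ^ 4 := by
      rw [map_pow, map_mul, Complex.conj_ofReal, mul_pow, hRE]
    rw [← lhs, ← rhs]
    exact hG4
  have hNne : ((N : ℂ)) ^ 2 ≠ 0 := pow_ne_zero _ (Nat.cast_ne_zero.mpr (by omega))
  have hE4 : eQZ Arf ^ 4 = (starRingEnd ℂ (eQZ Arf)) ^ 4 := mul_left_cancel₀ hNne hEE
  have hE8 : eQZ ((8 : ℕ) • Arf) = 1 := by
    rw [eQZ_nsmul]
    have hEconj : starRingEnd ℂ (eQZ Arf) = eQZ (-Arf) := (eQZ_neg Arf).symm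
    calc eQZ Arf ^ 8 = eQZ Arf ^ 4 * eQZ Arf ^ 4 := by ring
      _ = eQZ Arf ^ 4 * (starRingEnd ℂ (eQZ Arf)) ^ 4 := by rw [← hE4]
      _ = (eQZ Arf * starRingEnd ℂ (eQZ Arf)) ^ 4 := by ring
      _ = (eQZ (Arf + -Arf)) ^ 4 := by rw [hEconj, ← eQZ_add]
      _ = 1 := by rw [add_neg_cancel, eQZ_zero]; norm_num
  have h8 : (8 : ℕ) • Arf = 0 := eQZ_eq_one hE8
  rw [show ((8 : ℤ) • Arf) = ((8 : ℕ) • Arf) by rw [← natCast_zsmul]; norm_num]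
  exact h8
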